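/- In the algebra B with conformal vector ω = (5/6)(e₁ + e₂ + e₃), the element η := ω − e₁ satisfies η·η = 2η and (η|η) = 3/5, so η is a Virasoro vector of central charge 6/5; moreover b := e₂ − e₃ satisfies e₁·b = (2/5)b and η·b = (8/5)b, so b is a common eigenvector of e₁ and η with eigenvalue pair (2/5, 8/5). -/

import Mathlib

/-- In the 3-dimensional Griess algebra `B` with basis `e₁,e₂,e₃`
(products `eᵢ·eᵢ = 2eᵢ`, `eᵢ·eⱼ = (1/5)(eᵢ+eⱼ−e_k)`, form `(eᵢ|eᵢ) = 2/5`,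
`(eᵢ|eⱼ) = 1/25`), with conformal vector `ω = (5/6)(e₁+e₂+e₃)`, the element
`η = ω − e₁` satisfies `η·η = 2η` and `(η|η) = 3/5` (so `η` is a Virasoro
vector of central charge `6/5`), and `b = e₂ − e₃` satisfies `e₁·b = (2/5)b`
and `η·b = (8/5)b`. -/
theorem stmt_6 {B : Type*} [AddCommGroup B] [Module ℝ B]
    (mul : B →ₗ[ℝ] B →ₗ[ℝ] B) (bf : B →ₗ[ℝ] B →ₗ[ℝ] ℝ)
    (hcomm : ∀ x y, mul x y = mul y x)
    (hsymm : ∀ x y, bf x y = bf y x)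
    (e : Module.Basis (Fin 3) ℝ B)
    (hdiag : ∀ i, mul (e i) (e i) = (2 : ℝ) • e i)
    (hoff : ∀ i j k : Fin 3, i ≠ j → j ≠ k → i ≠ k →
      mul (e i) (e j) = (1/5 : ℝ) • (e i + e j - e k))
    (hbd : ∀ i, bf (e i) (e i) = 2/5)
    (hbo : ∀ i j, i ≠ j → bf (e i) (e j) = 1/25) :
    mul ((5/6 : ℝ) • (e 0 + e 1 + e 2) - e 0) ((5/6 : ℝ) • (e 0 + e 1 + e 2) - e 0)
        = (2 : ℝ) • ((5/6 : ℝ) • (e 0 + e 1 + e 2) - e 0) ∧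
    bf ((5/6 : ℝ) • (e 0 + e 1 + e 2) - e 0) ((5/6 : ℝ) • (e 0 + e 1 + e 2) - e 0) = 3/5 ∧
    mul (e 0) (e 1 - e 2) = (2/5 : ℝ) • (e 1 - e 2) ∧
    mul ((5/6 : ℝ) • (e 0 + e 1 + e 2) - e 0) (e 1 - e 2) = (8/5 : ℝ) • (e 1 - e 2) := by
  have h01 := hoff 0 1 2 (by decide) (by decide) (by decide)
  have h12 := hoff 1 2 0 (by decide) (by decide) (by decide)
  have h02 := hoff 0 2 1 (by decide) (by decide) (by decide)
  have h10 : mul (e 1) (e 0) = (1/5 : ℝ) • (e 0 + e 1 - e 2) := by rw [hcomm]; exact h01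
  have h20 : mul (e 2) (e 0) = (1/5 : ℝ) • (e 0 + e 2 - e 1) := by rw [hcomm]; exact h02
  have h21 : mul (e 2) (e 1) = (1/5 : ℝ) • (e 1 + e 2 - e 0) := by rw [hcomm]; exact h12
  have d0 := hdiag 0; have d1 := hdiag 1; have d2 := hdiag 2
  have b00 := hbd 0; have b11 := hbd 1; have b22 := hbd 2
  have b01 := hbo 0 1 (by decide); have b02 := hbo 0 2 (by decide)
  have b12 := hbo 1 2 (by decide)
  have b10 : bf (e 1) (e 0) = 1/25 := by rw [hsymm]; exact b01
  have b20 : bf (e 2) (e 0) = 1/25 := by rw [hsymm]; exact b02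
  have b21 : bf (e 2) (e 1) = 1/25 := by rw [hsymm]; exact b12
  refine ⟨?_, ?_, ?_, ?_⟩ <;>
    simp only [map_add, map_sub, map_smul, LinearMap.add_apply, LinearMap.sub_apply,
      LinearMap.smul_apply, h01, h12, h02, h10, h20, h21, d0, d1, d2,
      b00, b11, b22, b01, b02, b12, b10, b20, b21, smul_eq_mul]
  · module
  · ring
  · module
  · module
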